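/- Let n ≥ 1, let α₁, …, αₙ ∈ (-1, ∞), set α = α₁ + ⋯ + αₙ, and let t > 0. Then the integral over the ordered simplex {0 < r₁ < r₂ < ⋯ < rₙ < t} of ∏_{i=1}^{n} (r_{i+1} - r_i)^{α_i} dr₁ ⋯ drₙ, with the convention r_{n+1} = t, equals (∏_{i=1}^{n} Γ(α_i + 1)) · t^{α+n} / Γ(α + n + 1). -/

import Mathlib

open MeasureTheory Real

section Helpers

-- real Beta integral on [0,1]
lemma betaReal01 {p q : ℝ} (hp : -1 < p) (hq : -1 < q) :
    ∫ x in (0:ℝ)..1, x ^ p * (1 - x) ^ q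
      = Real.Gamma (p+1) * Real.Gamma (q+1) / Real.Gamma (p+q+2) := by
  have hp' : (0:ℝ) < p + 1 := by linarith
  have hq' : (0:ℝ) < q + 1 := by linarith
  have h := Complex.Gamma_mul_Gamma_eq_betaIntegral
    (s := ((p+1 : ℝ) : ℂ)) (t := ((q+1 : ℝ) : ℂ)) (by simpa using hp') (by simpa using hq')
  have hbeta : Complex.betaIntegral ((p+1:ℝ):ℂ) ((q+1:ℝ):ℂ)
      = ((∫ x in (0:ℝ)..1, x ^ p * (1 - x) ^ q : ℝ) : ℂ) := by
    rw [Complex.betaIntegral, ← intervalIntegral.integral_ofReal]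
    refine intervalIntegral.integral_congr fun x hx => ?_
    rw [Set.uIcc_of_le (by norm_num : (0:ℝ) ≤ 1)] at hx
    obtain ⟨hx0, hx1⟩ := hx
    push_cast
    rw [add_sub_cancel_right, add_sub_cancel_right,
      Complex.ofReal_cpow hx0, Complex.ofReal_cpow (by linarith),
      Complex.ofReal_sub, Complex.ofReal_one]
  rw [hbeta] at h
  have hsum : ((p+1:ℝ):ℂ) + ((q+1:ℝ):ℂ) = ((p+q+2:ℝ):ℂ) := by push_cast; ring
  rw [hsum, Complex.Gamma_ofReal, Complex.Gamma_ofReal, Complex.Gamma_ofReal] at h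
  have hne : Real.Gamma (p+q+2) ≠ 0 := (Real.Gamma_pos_of_pos (by linarith)).ne'
  have := congrArg Complex.re h
  simp only [← Complex.ofReal_mul, Complex.ofReal_re] at this
  field_simp
  linarith [this]

lemma betaIntegrable {p q : ℝ} (hp : -1 < p) (hq : -1 < q) {a b : ℝ} (hab : a < b) :
    IntervalIntegrable (fun x => (x - a) ^ p * (b - x) ^ q) volume a b := by
  set m := (a + b) / 2 with hm
  have ham : a < m := by rw [hm]; linarith
  have hmb : m < b := by rw [hm]; linarith
  have h1 : IntervalIntegrable (fun x => (x - a) ^ p) volume a m := by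
    have := (intervalIntegral.intervalIntegrable_rpow' (a := 0) (b := m - a) hp).comp_sub_right a
    simpa using this
  have h2 : IntervalIntegrable (fun x => (b - x) ^ q) volume m b := by
    have := ((intervalIntegral.intervalIntegrable_rpow' (a := 0) (b := b - m) hq).comp_sub_left b).symm
    simpa using this
  have c1 : ContinuousOn (fun x : ℝ => (b - x) ^ q) (Set.uIcc a m) := by
    refine ((continuous_const.sub continuous_id).continuousOn).rpow_const fun x hx => ?_
    rw [Set.uIcc_of_le ham.le] at hx
    exact Or.inl (by simp; linarith [hx.2])
  have c2 : ContinuousOn (fun x : ℝ => (x - a) ^ p) (Set.uIcc m b) := by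
    refine ((continuous_id.sub continuous_const).continuousOn).rpow_const fun x hx => ?_
    rw [Set.uIcc_of_le hmb.le] at hx
    exact Or.inl (by simp; linarith [hx.1])
  exact (h1.mul_continuousOn c1).trans (by simpa [mul_comm] using h2.continuousOn_mul c2)

lemma betaRealScaled {p q : ℝ} (hp : -1 < p) (hq : -1 < q) {a b : ℝ} (hab : a < b) :
    ∫ x in a..b, (x - a) ^ p * (b - x) ^ q
      = Real.Gamma (p+1) * Real.Gamma (q+1) / Real.Gamma (p+q+2) * (b-a) ^ (p+q+1) := by
  have hc : (0:ℝ) < b - a := by linarith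
  have step1 : (∫ x in a..b, (x - a) ^ p * (b - x) ^ q)
      = ∫ x in (0:ℝ)..(b-a), x ^ p * ((b-a) - x) ^ q := by
    have h := (intervalIntegral.integral_comp_add_right (fun x => (x - a) ^ p * (b - x) ^ q) a
      (a := 0) (b := b - a)).symm
    rw [zero_add, sub_add_cancel] at h
    rw [h]
    refine intervalIntegral.integral_congr fun x hx => ?_
    rw [add_sub_cancel_right, show b - (x + a) = b - a - x by ring]
  have step2 : (∫ x in (0:ℝ)..(b-a), x ^ p * ((b-a) - x) ^ q)
      = (b-a) • ∫ u in (0:ℝ)..1, ((b-a)*u) ^ p * ((b-a) - (b-a)*u) ^ q := by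
    rw [intervalIntegral.integral_comp_mul_left (fun x => x ^ p * ((b-a) - x) ^ q) hc.ne']
    rw [mul_zero, mul_one, smul_smul, mul_inv_cancel₀ hc.ne', one_smul]
  have step3 : (∫ u in (0:ℝ)..1, ((b-a)*u) ^ p * ((b-a) - (b-a)*u) ^ q)
      = (b-a) ^ p * (b-a) ^ q * ∫ u in (0:ℝ)..1, u ^ p * (1-u) ^ q := by
    rw [← intervalIntegral.integral_const_mul]
    refine intervalIntegral.integral_congr fun u hu => ?_
    rw [Set.uIcc_of_le (by norm_num : (0:ℝ) ≤ 1)] at hu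
    have h1 : ((b-a)*u) ^ p = (b-a) ^ p * u ^ p := Real.mul_rpow hc.le hu.1
    have h2 : ((b-a) - (b-a)*u) ^ q = (b-a) ^ q * (1-u) ^ q := by
      rw [show (b-a) - (b-a)*u = (b-a)*(1-u) by ring]
      exact Real.mul_rpow hc.le (by linarith [hu.2])
    rw [h1, h2]; ring
  rw [step1, step2, step3, betaReal01 hp hq, smul_eq_mul]
  rw [show (b-a) * ((b-a)^p * (b-a)^q * _) = ((b-a)^(1:ℝ) * (b-a)^p * (b-a)^q) * (Real.Gamma (p+1) * Real.Gamma (q+1) / Real.Gamma (p+q+2)) by rw [Real.rpow_one]; ring]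
  rw [← Real.rpow_add hc, ← Real.rpow_add hc]
  ring_nf

lemma betaLintegral {p q : ℝ} (hp : -1 < p) (hq : -1 < q) {a b : ℝ} (hab : a < b) :
    ∫⁻ x in Set.Ioo a b, ENNReal.ofReal ((x - a) ^ p * (b - x) ^ q)
      = ENNReal.ofReal
        (Real.Gamma (p+1) * Real.Gamma (q+1) / Real.Gamma (p+q+2) * (b-a) ^ (p+q+1)) := by
  have hint : IntegrableOn (fun x => (x - a) ^ p * (b - x) ^ q) (Set.Ioo a b) volume :=
    ((betaIntegrable hp hq hab).1).mono_set Set.Ioo_subset_Ioc_self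
  have hnn : 0 ≤ᵐ[volume.restrict (Set.Ioo a b)] fun x => (x - a) ^ p * (b - x) ^ q := by
    refine (ae_restrict_iff' measurableSet_Ioo).2 (ae_of_all _ fun x hx => ?_)
    exact mul_nonneg (Real.rpow_nonneg (by linarith [hx.1]) _)
      (Real.rpow_nonneg (by linarith [hx.2]) _)
  rw [← MeasureTheory.ofReal_integral_eq_lintegral_ofReal hint hnn]
  congr 1
  rw [← MeasureTheory.integral_Ioc_eq_integral_Ioo, ← intervalIntegral.integral_of_le hab.le]
  exact betaRealScaled hp hq hab

/-- The ordered simplex. -/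
def Sset (n : ℕ) (t : ℝ) : Set (Fin n → ℝ) :=
  {r | (∀ i, 0 < r i) ∧ StrictMono r ∧ ∀ i, r i < t}

/-- The integrand. -/
noncomputable def Ff (n : ℕ) (α : Fin n → ℝ) (t : ℝ) (r : Fin n → ℝ) : ℝ :=
  ∏ i : Fin n, ((if h : (i : ℕ) + 1 < n then r ⟨(i : ℕ) + 1, h⟩ else t) - r i) ^ α i

lemma measurableSet_Sset (n : ℕ) (t : ℝ) : MeasurableSet (Sset n t) := by
  have h1 : MeasurableSet {r : Fin n → ℝ | ∀ i, 0 < r i} := by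
    rw [Set.setOf_forall]
    exact MeasurableSet.iInter fun i => measurableSet_lt measurable_const (measurable_pi_apply i)
  have h3 : MeasurableSet {r : Fin n → ℝ | ∀ i, r i < t} := by
    rw [Set.setOf_forall]
    exact MeasurableSet.iInter fun i => measurableSet_lt (measurable_pi_apply i) measurable_const
  have h2 : MeasurableSet {r : Fin n → ℝ | StrictMono r} := by
    have he : {r : Fin n → ℝ | StrictMono r}
        = ⋂ (i) (j), {r : Fin n → ℝ | i < j → r i < r j} := by
      ext r
      simp only [Set.mem_setOf_eq, Set.mem_iInter]
      exact ⟨fun h i j hij => h hij, fun h a b hab => h a b hab⟩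
    rw [he]
    refine MeasurableSet.iInter fun i => MeasurableSet.iInter fun j => ?_
    by_cases hij : i < j
    · have : {r : Fin n → ℝ | i < j → r i < r j} = {r | r i < r j} := by ext r; simp [hij]
      rw [this]
      exact measurableSet_lt (measurable_pi_apply i) (measurable_pi_apply j)
    · have : {r : Fin n → ℝ | i < j → r i < r j} = Set.univ := by ext r; simp [hij]
      rw [this]; exact MeasurableSet.univ
  have : Sset n t = {r : Fin n → ℝ | ∀ i, 0 < r i}
      ∩ ({r : Fin n → ℝ | StrictMono r} ∩ {r : Fin n → ℝ | ∀ i, r i < t}) := by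
    ext r; simp [Sset, Set.mem_setOf_eq]
  rw [this]
  exact h1.inter (h2.inter h3)

lemma measurable_Ff (n : ℕ) (α : Fin n → ℝ) (t : ℝ) : Measurable (Ff n α t) := by
  unfold Ff
  refine Finset.measurable_prod _ fun i _ => ?_
  by_cases h : (i : ℕ) + 1 < n
  · simp only [dif_pos h]; fun_prop
  · simp only [dif_neg h]; fun_prop

lemma snoc_mem_Sset {k : ℕ} {t x : ℝ} {q : Fin (k+1) → ℝ} :
    Fin.snoc q x ∈ Sset (k+2) t ↔ q ∈ Sset (k+1) t ∧ x ∈ Set.Ioo (q (Fin.last k)) t := by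
  constructor
  · rintro ⟨h1, h2, h3⟩
    refine ⟨⟨fun i => ?_, fun i j hij => ?_, fun i => ?_⟩, ?_, ?_⟩
    · simpa using h1 i.castSucc
    · have := h2 (show i.castSucc < j.castSucc by simpa using hij)
      simpa using this
    · simpa using h3 i.castSucc
    · have := h2 (Fin.castSucc_lt_last (Fin.last k))
      simpa using this
    · simpa using h3 (Fin.last (k+1))
  · rintro ⟨⟨hq1, hq2, hq3⟩, hx1, hx2⟩
    refine ⟨fun i => ?_, fun i j hij => ?_, fun i => ?_⟩
    · refine Fin.lastCases ?_ (fun i => ?_) i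
      · simp only [Fin.snoc_last]
        exact lt_trans (hq1 (Fin.last k)) hx1
      · simpa using hq1 i
    · revert hij
      refine Fin.lastCases ?_ (fun j' => ?_) j <;> intro hij
      · obtain ⟨i', rfl⟩ := Fin.exists_castSucc_eq.mpr hij.ne
        simp only [Fin.snoc_castSucc, Fin.snoc_last]
        exact lt_of_le_of_lt (hq2.monotone (Fin.le_last i')) hx1
      · obtain ⟨i', rfl⟩ := Fin.exists_castSucc_eq.mpr
          (ne_of_lt (lt_of_lt_of_le hij (Fin.le_last _)))
        simp only [Fin.snoc_castSucc]
        exact hq2 (by simpa using hij)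
    · refine Fin.lastCases ?_ (fun i => ?_) i
      · simpa using hx2
      · simpa using hq3 i

/-- Product of the "interior" gaps. -/
noncomputable def Hf (k : ℕ) (γ : Fin k → ℝ) (q : Fin (k+1) → ℝ) : ℝ :=
  ∏ j : Fin k, (q j.succ - q j.castSucc) ^ γ j

lemma Ff_succ (m : ℕ) (β : Fin (m+1) → ℝ) (t : ℝ) (q : Fin (m+1) → ℝ) :
    Ff (m+1) β t q
      = Hf m (fun j => β j.castSucc) q * (t - q (Fin.last m)) ^ β (Fin.last m) := by
  unfold Ff Hf
  rw [Fin.prod_univ_castSucc]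
  congr 1
  · refine Finset.prod_congr rfl fun j _ => ?_
    have hcond : ((j.castSucc : ℕ)) + 1 < m + 1 := by
      have := j.isLt; simp only [Fin.coe_castSucc]; omega
    rw [dif_pos hcond,
      show (⟨(j.castSucc : ℕ) + 1, hcond⟩ : Fin (m+1)) = j.succ from Fin.ext (by simp)]
  · rw [dif_neg (by simp)]

lemma Ff_snoc (k : ℕ) (α : Fin (k+2) → ℝ) (t x : ℝ) (q : Fin (k+1) → ℝ) :
    Ff (k+2) α t (Fin.snoc q x)
      = Hf k (fun j => α j.castSucc.castSucc) q
        * (x - q (Fin.last k)) ^ α ((Fin.last k).castSucc)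
        * (t - x) ^ α (Fin.last (k+1)) := by
  have h1 : Ff (k+2) α t (Fin.snoc q x)
      = (∏ j : Fin (k+1),
          ((if h : (j : ℕ) + 1 < k + 1 then q ⟨(j : ℕ) + 1, h⟩ else x) - q j)
            ^ (fun j : Fin (k+1) => α j.castSucc) j)
        * (t - x) ^ α (Fin.last (k+1)) := by
    unfold Ff
    rw [Fin.prod_univ_castSucc]
    congr 1
    · refine Finset.prod_congr rfl fun j _ => ?_
      have hc : ((j.castSucc : ℕ)) + 1 < k + 2 := by
        have := j.isLt; simp only [Fin.coe_castSucc]; omega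
      rw [dif_pos hc, Fin.snoc_castSucc]
      by_cases h : (j : ℕ) + 1 < k + 1
      · rw [dif_pos h,
          show (⟨(j.castSucc : ℕ) + 1, hc⟩ : Fin (k+2)) = Fin.castSucc ⟨(j : ℕ) + 1, h⟩ from
            Fin.ext (by simp), Fin.snoc_castSucc]
      · rw [dif_neg h,
          show (⟨(j.castSucc : ℕ) + 1, hc⟩ : Fin (k+2)) = Fin.last (k+1) from
            Fin.ext (by simp; omega), Fin.snoc_last]
    · rw [dif_neg (by simp), Fin.snoc_last]
  have h2 : (∏ j : Fin (k+1),
          ((if h : (j : ℕ) + 1 < k + 1 then q ⟨(j : ℕ) + 1, h⟩ else x) - q j)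
            ^ (fun j : Fin (k+1) => α j.castSucc) j)
      = Ff (k+1) (fun j => α j.castSucc) x q := rfl
  rw [h1, h2, Ff_succ]

lemma key (n : ℕ) (α : Fin n → ℝ) (hα : ∀ i, -1 < α i) (t : ℝ) (ht : 0 < t) (hn : 1 ≤ n) :
    (∫⁻ r in Sset n t, ENNReal.ofReal (Ff n α t r))
      = ENNReal.ofReal ((∏ i, Real.Gamma (α i + 1)) * t ^ (∑ i, α i + n) /
          Real.Gamma (∑ i, α i + n + 1)) := by
  induction n with
  | zero => omega
  | succ k IH =>
  rcases k with _ | m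
  · -- base case n = 1
    rw [← lintegral_indicator (measurableSet_Sset 1 t)]
    erw [← ((volume_preserving_funUnique (Fin 1) ℝ).symm
        (MeasurableEquiv.funUnique (Fin 1) ℝ)).lintegral_comp_emb
      (MeasurableEquiv.funUnique (Fin 1) ℝ).symm.measurableEmbedding]
    have hpt : ∀ x : ℝ,
        (Sset 1 t).indicator (fun r => ENNReal.ofReal (Ff 1 α t r))
          ((MeasurableEquiv.funUnique (Fin 1) ℝ).symm x)
        = (Set.Ioo (0:ℝ) t).indicator
            (fun x => ENNReal.ofReal ((x - 0) ^ (0:ℝ) * (t - x) ^ α 0)) x := by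
      intro x
      have hsymm : (MeasurableEquiv.funUnique (Fin 1) ℝ).symm x = fun _ => x := rfl
      rw [hsymm]
      have hmem : (fun _ : Fin 1 => x) ∈ Sset 1 t ↔ x ∈ Set.Ioo (0:ℝ) t := by
        constructor
        · rintro ⟨h1, _, h3⟩; exact ⟨h1 0, h3 0⟩
        · rintro ⟨h1, h2⟩
          exact ⟨fun _ => h1, fun i j hij => absurd (Subsingleton.elim i j) hij.ne, fun _ => h2⟩
      have hval : Ff 1 α t (fun _ => x) = (x - 0) ^ (0:ℝ) * (t - x) ^ α 0 := by
        simp [Ff, Real.rpow_zero]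
      by_cases hx : x ∈ Set.Ioo (0:ℝ) t
      · rw [Set.indicator_of_mem hx, Set.indicator_of_mem (hmem.2 hx), hval]
      · rw [Set.indicator_of_notMem hx, Set.indicator_of_notMem (fun hc => hx (hmem.1 hc))]
    rw [lintegral_congr hpt, lintegral_indicator measurableSet_Ioo,
      betaLintegral (by norm_num) (hα 0) ht]
    congr 1
    rw [Fin.sum_univ_one, Fin.prod_univ_one]
    norm_num [Real.Gamma_one]
    rw [show α 0 + 1 + 1 = α 0 + 2 by ring]
    ring
  · -- inductive step, n = m + 2
    have hS2 := measurableSet_Sset (m+2) t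
    have hS1 := measurableSet_Sset (m+1) t
    set g : (Fin (m+2) → ℝ) → ENNReal := fun r => ENNReal.ofReal (Ff (m+2) α t r) with hg
    have hgm : Measurable g := (measurable_Ff _ _ _).ennreal_ofReal
    rw [← lintegral_indicator hS2]
    rw [← ((volume_preserving_piFinSuccAbove (fun _ : Fin (m+2) => ℝ)
        (Fin.last (m+1))).symm (MeasurableEquiv.piFinSuccAbove (fun _ : Fin (m+2) => ℝ)
        (Fin.last (m+1)))).lintegral_comp_emb
      (MeasurableEquiv.piFinSuccAbove (fun _ : Fin (m+2) => ℝ)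
        (Fin.last (m+1))).symm.measurableEmbedding ((Sset (m+2) t).indicator g)]
    have hsymm : ∀ p : ℝ × (Fin (m+1) → ℝ),
        (MeasurableEquiv.piFinSuccAbove (fun _ : Fin (m+2) => ℝ) (Fin.last (m+1))).symm p
          = Fin.snoc p.2 p.1 := by
      intro p
      rw [MeasurableEquiv.piFinSuccAbove_symm_apply]
      exact Fin.insertNth_last' p.1 p.2
    rw [Measure.volume_eq_prod]
    have hmeasp : AEMeasurable (fun p : ℝ × (Fin (m+1) → ℝ) =>
        (Sset (m+2) t).indicator g
          ((MeasurableEquiv.piFinSuccAbove (fun _ : Fin (m+2) => ℝ)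
            (Fin.last (m+1))).symm p)) (volume.prod volume) :=
      (((hgm.indicator hS2).comp (MeasurableEquiv.measurable _)).aemeasurable)
    rw [lintegral_prod_symm _ hmeasp]
    have hfib : ∀ q : Fin (m+1) → ℝ,
        (∫⁻ x, (Sset (m+2) t).indicator g
            ((MeasurableEquiv.piFinSuccAbove (fun _ : Fin (m+2) => ℝ)
              (Fin.last (m+1))).symm (x, q)))
          = (Sset (m+1) t).indicator
              (fun q => ∫⁻ x in Set.Ioo (q (Fin.last m)) t, g (Fin.snoc q x)) q := by
      intro q
      by_cases hq : q ∈ Sset (m+1) t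
      · rw [Set.indicator_of_mem hq, ← lintegral_indicator measurableSet_Ioo]
        refine lintegral_congr fun x => ?_
        rw [hsymm (x, q)]
        by_cases hx : x ∈ Set.Ioo (q (Fin.last m)) t
        · rw [Set.indicator_of_mem hx, Set.indicator_of_mem (snoc_mem_Sset.2 ⟨hq, hx⟩)]
        · rw [Set.indicator_of_notMem hx,
            Set.indicator_of_notMem (fun hc => hx (snoc_mem_Sset.1 hc).2)]
      · rw [Set.indicator_of_notMem hq]
        have hz : ∀ x : ℝ, (Sset (m+2) t).indicator g
            ((MeasurableEquiv.piFinSuccAbove (fun _ : Fin (m+2) => ℝ)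
              (Fin.last (m+1))).symm (x, q)) = 0 := by
          intro x
          rw [hsymm (x, q)]
          exact Set.indicator_of_notMem (fun hc => hq (snoc_mem_Sset.1 hc).1) _
        simp only [hz, lintegral_zero]
    rw [lintegral_congr hfib, lintegral_indicator hS1]
    set p1 := α ((Fin.last m).castSucc) with hp1
    set p2 := α (Fin.last (m+1)) with hp2
    have hp1' : -1 < p1 := hα _
    have hp2' : -1 < p2 := hα _
    set B := Real.Gamma (p1+1) * Real.Gamma (p2+1) / Real.Gamma (p1+p2+2) with hB
    have hΓc : (0:ℝ) < Real.Gamma (p1+p2+2) := Real.Gamma_pos_of_pos (by linarith)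
    have hBnn : 0 ≤ B := div_nonneg
      (mul_nonneg (Real.Gamma_pos_of_pos (by linarith)).le
        (Real.Gamma_pos_of_pos (by linarith)).le) hΓc.le
    set α'' : Fin (m+1) → ℝ :=
      fun j => if _ : (j : ℕ) + 1 < m + 1 then α j.castSucc else α j.castSucc + p2 + 1
      with hα''def
    have hα''cs : ∀ j : Fin m, α'' j.castSucc = α j.castSucc.castSucc := by
      intro j
      have h : ((j.castSucc : ℕ)) + 1 < m + 1 := by
        have := j.isLt; simp only [Fin.coe_castSucc]; omega
      simp only [hα''def, dif_pos h]
    have hα''last : α'' (Fin.last m) = p1 + p2 + 1 := by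
      simp only [hα''def]
      rw [dif_neg (by simp)]
    have hα'' : ∀ j, -1 < α'' j := by
      intro j
      by_cases h : (j : ℕ) + 1 < m + 1
      · simp only [hα''def, dif_pos h]; exact hα _
      · simp only [hα''def, dif_neg h]
        have := hα j.castSucc; linarith
    have hinner : ∀ q ∈ Sset (m+1) t,
        (∫⁻ x in Set.Ioo (q (Fin.last m)) t, g (Fin.snoc q x))
          = ENNReal.ofReal B * ENNReal.ofReal (Ff (m+1) α'' t q) := by
      intro q hq
      obtain ⟨hq1, hq2, hq3⟩ := hq
      have ha : q (Fin.last m) < t := hq3 _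
      have hHnn : 0 ≤ Hf m (fun j => α j.castSucc.castSucc) q :=
        Finset.prod_nonneg fun j _ => Real.rpow_nonneg
          (by have := hq2 (Fin.castSucc_lt_succ (i := j)); linarith) _
      have hsplit : ∀ x : ℝ, g (Fin.snoc q x)
          = ENNReal.ofReal (Hf m (fun j => α j.castSucc.castSucc) q)
            * ENNReal.ofReal ((x - q (Fin.last m)) ^ p1 * (t - x) ^ p2) := by
        intro x
        rw [hg]
        simp only
        rw [Ff_snoc, mul_assoc, ENNReal.ofReal_mul hHnn]
      simp only [hsplit]
      rw [lintegral_const_mul' _ _ ENNReal.ofReal_ne_top, betaLintegral hp1' hp2' ha]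
      have hFf : Ff (m+1) α'' t q
          = Hf m (fun j => α j.castSucc.castSucc) q
            * (t - q (Fin.last m)) ^ (p1 + p2 + 1) := by
        rw [Ff_succ]
        congr 1
        · congr 1
          funext j
          exact hα''cs j
        · rw [hα''last]
      rw [hFf, ← ENNReal.ofReal_mul hHnn, ← ENNReal.ofReal_mul hBnn]
      congr 1
      ring
    rw [setLIntegral_congr_fun hS1 hinner,
      lintegral_const_mul' _ _ ENNReal.ofReal_ne_top,
      IH α'' hα'' (by omega)]
    -- final arithmetic
    rw [← ENNReal.ofReal_mul hBnn]
    congr 1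
    have hsum : (∑ j, α'' j) = (∑ i, α i) + 1 := by
      rw [Fin.sum_univ_castSucc, Fin.sum_univ_castSucc (n := m+1),
        Fin.sum_univ_castSucc (n := m)]
      rw [Finset.sum_congr rfl fun j _ => hα''cs j, hα''last]
      ring
    have hprod : (∏ j, Real.Gamma (α'' j + 1))
        = (∏ j : Fin m, Real.Gamma (α j.castSucc.castSucc + 1))
          * Real.Gamma (p1 + p2 + 2) := by
      rw [Fin.prod_univ_castSucc]
      congr 1
      · exact Finset.prod_congr rfl fun j _ => by rw [hα''cs j]
      · rw [hα''last, show p1 + p2 + 1 + 1 = p1 + p2 + 2 by ring]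
    have hprodα : (∏ i, Real.Gamma (α i + 1))
        = (∏ j : Fin m, Real.Gamma (α j.castSucc.castSucc + 1))
          * Real.Gamma (p1 + 1) * Real.Gamma (p2 + 1) := by
      rw [Fin.prod_univ_castSucc, Fin.prod_univ_castSucc (n := m)]
    rw [hsum, hprod, hprodα, hB]
    have hcast : ((m:ℝ) + 1 + 1) = ((m+1+1 : ℕ) : ℝ) := by push_cast; ring
    rw [show (∑ i, α i) + 1 + ((m+1 : ℕ) : ℝ) = (∑ i, α i) + ((m+1+1 : ℕ) : ℝ) by
      push_cast; ring]
    have hBc : Real.Gamma (p1 + 1) * Real.Gamma (p2 + 1) / Real.Gamma (p1+p2+2)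
        * Real.Gamma (p1+p2+2) = Real.Gamma (p1 + 1) * Real.Gamma (p2 + 1) :=
      div_mul_cancel₀ _ hΓc.ne'
    linear_combination ((∏ j : Fin m, Real.Gamma (α j.castSucc.castSucc + 1))
      * t ^ ((∑ i, α i) + ((m+1+1:ℕ):ℝ))
      / Real.Gamma ((∑ i, α i) + ((m+1+1:ℕ):ℝ) + 1)) * hBc

end Helpers

theorem stmt_1 (n : ℕ) (hn : 1 ≤ n) (α : Fin n → ℝ) (hα : ∀ i, -1 < α i)
    (t : ℝ) (ht : 0 < t) :
    (∫ r : Fin n → ℝ in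
        {r | (∀ i, 0 < r i) ∧ StrictMono r ∧ ∀ i, r i < t},
        ∏ i : Fin n,
          ((if h : (i : ℕ) + 1 < n then r ⟨(i : ℕ) + 1, h⟩ else t) - r i) ^ α i) =
      (∏ i : Fin n, Real.Gamma (α i + 1)) * t ^ (∑ i, α i + n) /
        Real.Gamma (∑ i, α i + n + 1) := by
  have hS := measurableSet_Sset n t
  have hnonneg : 0 ≤ᵐ[volume.restrict (Sset n t)] Ff n α t := by
    refine (ae_restrict_iff' hS).2 (ae_of_all _ fun r hr => ?_)
    obtain ⟨h1, h2, h3⟩ := hr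
    refine Finset.prod_nonneg fun i _ => Real.rpow_nonneg ?_ _
    by_cases h : (i : ℕ) + 1 < n
    · rw [dif_pos h]
      have : i < (⟨(i : ℕ) + 1, h⟩ : Fin n) := by simp [Fin.lt_def]
      have := h2 this
      linarith
    · rw [dif_neg h]
      have := h3 i
      linarith
  have hsm : AEStronglyMeasurable (Ff n α t) (volume.restrict (Sset n t)) :=
    (measurable_Ff n α t).aestronglyMeasurable
  have hne : Nonempty (Fin n) := ⟨⟨0, hn⟩⟩
  have hsumlt : -(n : ℝ) < ∑ i, α i := by
    have h := Finset.sum_lt_sum_of_nonempty (Finset.univ_nonempty (α := Fin n))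
      (f := fun _ => (-1 : ℝ)) (g := α) (fun i _ => hα i)
    simp only [Finset.sum_const, Finset.card_univ, Fintype.card_fin, nsmul_eq_mul,
      mul_neg_one] at h
    exact h
  have hΓpos : 0 < Real.Gamma (∑ i, α i + n + 1) :=
    Real.Gamma_pos_of_pos (by linarith)
  have hRHS : 0 ≤ (∏ i, Real.Gamma (α i + 1)) * t ^ (∑ i, α i + n) /
      Real.Gamma (∑ i, α i + n + 1) :=
    div_nonneg (mul_nonneg (Finset.prod_nonneg fun i _ =>
      (Real.Gamma_pos_of_pos (by linarith [hα i])).le) (Real.rpow_nonneg ht.le _)) hΓpos.le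
  show (∫ r in Sset n t, Ff n α t r) = _
  rw [MeasureTheory.integral_eq_lintegral_of_nonneg_ae hnonneg hsm,
    key n α hα t ht hn, ENNReal.toReal_ofReal hRHS]
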